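/- Let τ : ℂ^∞ → ℂ (a formal function of finitely many of the variables t_0, t_1, …) and define τ̃(t;q) := τ(t^G(t;q)) · exp(g(t;q)/ε²), where t^G_n(t;q) = Σ_{k≥0} (q^k/k!) t_{n+k} and g(t;q) = (1/2) Σ_{i,j≥0} (q^{i+j+1}/(i+j+1)) (t_i/i!)(t_j/j!). Then τ̃ satisfies ∂τ̃/∂q = Σ_{k≥0} t_{k+1} ∂τ̃/∂t_k + (t_0²/(2ε²)) τ̃. -/

import Mathlib

/-- The Galilean shift `t^G_n(t;q) := ∑_{k} (q^k/k!) t_{n+k}`, truncated at `M`. -/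
noncomputable def tG (M : ℕ) (t : ℕ → ℂ) (q : ℂ) (n : ℕ) : ℂ :=
  ∑ k ∈ Finset.range M, q ^ k / (Nat.factorial k : ℂ) * t (n + k)

/-- `g(t;q) := (1/2) ∑_{i,j} (q^{i+j+1}/(i+j+1)) (t_i/i!)(t_j/j!)`, truncated at `M`. -/
noncomputable def gfun (M : ℕ) (t : ℕ → ℂ) (q : ℂ) : ℂ :=
  (1 / 2) * ∑ i ∈ Finset.range M, ∑ j ∈ Finset.range M,
    q ^ (i + j + 1) / ((i : ℂ) + j + 1) *
      (t i / (Nat.factorial i : ℂ)) * (t j / (Nat.factorial j : ℂ))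

/-- `τ̃(t;q) := τ(t^G(t;q)) exp(g(t;q)/ε²)`, for `τ = F` a differentiable function
of the variables `t_0,…,t_{M−1}`. -/
noncomputable def tauTilde (M : ℕ) (ε : ℂ) (F : (Fin M → ℂ) → ℂ)
    (t : ℕ → ℂ) (q : ℂ) : ℂ :=
  F (fun i => tG M t q (i : ℕ)) * Complex.exp (gfun M t q / ε ^ 2)

open Finset in
private lemma fac_ne (k : ℕ) : (k.factorial : ℂ) ≠ 0 := by
  exact_mod_cast Nat.factorial_ne_zero k

open Finset

lemma tG_hasDerivAt_q (M : ℕ) (t : ℕ → ℂ) (ht : ∀ n, M ≤ n → t n = 0) (q : ℂ) (n : ℕ) :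
    HasDerivAt (fun s => tG M t s n) (tG M t q (n + 1)) q := by
  have h : HasDerivAt (fun s => tG M t s n)
      (∑ k ∈ range M, (k : ℂ) * q ^ (k - 1) / (k.factorial : ℂ) * t (n + k)) q := by
    apply HasDerivAt.fun_sum
    intro k hk
    exact ((hasDerivAt_pow k q).div_const (k.factorial : ℂ)).mul_const (t (n + k))
  convert h using 1
  rcases M with _ | P
  · simp [tG]
  · rw [Finset.sum_range_succ' (fun k => (k : ℂ) * q ^ (k - 1) / (k.factorial : ℂ) * t (n + k)) P]
    have hfac : ∀ k : ℕ, ((k+1 : ℕ) : ℂ) * q ^ k / ((k+1).factorial : ℂ) = q ^ k / (k.factorial : ℂ) := by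
      intro k
      rw [Nat.factorial_succ]
      push_cast
      rw [div_eq_div_iff (by exact_mod_cast Nat.factorial_ne_zero (k+1)) (fac_ne k)]
      · push_cast [Nat.factorial_succ]; ring
    simp only [Nat.cast_zero, zero_mul, zero_div, mul_zero, add_zero, zero_add]
    rw [tG, Finset.sum_range_succ, ht (n + 1 + P) (by omega), mul_zero, add_zero]
    refine Finset.sum_congr rfl fun k hk => ?_
    rw [Nat.add_sub_cancel, hfac k, show n + 1 + k = n + (k + 1) by omega]

lemma tG0_sq (M : ℕ) (t : ℕ → ℂ) (q : ℂ) :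
    tG M t q 0 ^ 2 = ∑ i ∈ range M, ∑ j ∈ range M,
      q ^ (i + j) * (t i / (Nat.factorial i : ℂ)) * (t j / (Nat.factorial j : ℂ)) := by
  rw [tG, sq, Finset.sum_mul_sum]
  refine Finset.sum_congr rfl fun i _ => Finset.sum_congr rfl fun j _ => ?_
  simp only [Nat.zero_add]
  rw [pow_add]; ring

lemma gfun_hasDerivAt_q (M : ℕ) (t : ℕ → ℂ) (q : ℂ) :
    HasDerivAt (fun s => gfun M t s) (tG M t q 0 ^ 2 / 2) q := by
  have h : HasDerivAt (fun s => gfun M t s)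
      ((1/2) * ∑ i ∈ range M, ∑ j ∈ range M,
        (((i+j+1 : ℕ) : ℂ) * q ^ (i+j+1-1)) / ((i:ℂ)+j+1)
          * (t i / (Nat.factorial i : ℂ)) * (t j / (Nat.factorial j : ℂ))) q := by
    apply HasDerivAt.const_mul
    apply HasDerivAt.fun_sum; intro i hi
    apply HasDerivAt.fun_sum; intro j hj
    exact (((hasDerivAt_pow (i+j+1) q).div_const _).mul_const _).mul_const _
  convert h using 1
  have h2 : tG M t q 0 ^ 2 = ∑ i ∈ range M, ∑ j ∈ range M,
      q ^ (i+j) * (t i / (Nat.factorial i : ℂ)) * (t j / (Nat.factorial j : ℂ)) := by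
    rw [tG, sq, Finset.sum_mul_sum]
    refine Finset.sum_congr rfl fun i _ => Finset.sum_congr rfl fun j _ => ?_
    simp only [Nat.zero_add]
    rw [pow_add]; ring
  rw [h2, div_eq_mul_inv, mul_comm, ← one_div, Finset.mul_sum, Finset.mul_sum]
  refine Finset.sum_congr rfl fun i _ => ?_
  congr 1
  refine Finset.sum_congr rfl fun j _ => ?_
  have hne : ((i:ℂ)+j+1) ≠ 0 := by exact_mod_cast Nat.succ_ne_zero (i+j)
  rw [Nat.add_sub_cancel]
  push_cast
  field_simp

lemma tG_hasDerivAt_update (M : ℕ) (t : ℕ → ℂ) (q : ℂ) (k n : ℕ) (hk : k < M) (y : ℂ) :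
    HasDerivAt (fun s => tG M (Function.update t k s) q n)
      (if n ≤ k then q ^ (k - n) / ((k - n).factorial : ℂ) else 0) y := by
  have h : HasDerivAt (fun s => tG M (Function.update t k s) q n)
      (∑ m ∈ range M, q ^ m / (m.factorial : ℂ) * (if n + m = k then 1 else 0)) y := by
    simp only [tG, Function.update_apply]
    apply HasDerivAt.fun_sum
    intro m hm
    by_cases h : n + m = k
    · simpa [h] using (hasDerivAt_id y).const_mul (q ^ m / (m.factorial : ℂ))
    · simpa [h] using (hasDerivAt_const y (q ^ m / (m.factorial : ℂ) * t (n + m)))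
  convert h using 1
  by_cases hnk : n ≤ k
  · rw [if_pos hnk]
    have : ∀ m ∈ range M, q ^ m / (m.factorial : ℂ) * (if n + m = k then 1 else 0)
        = if m = k - n then q ^ m / (m.factorial : ℂ) else 0 := by
      intro m _
      by_cases h : n + m = k
      · rw [if_pos h, if_pos (by omega), mul_one]
      · rw [if_neg h, if_neg (by omega), mul_zero]
    rw [Finset.sum_congr rfl this, Finset.sum_ite_eq' (range M) (k - n)
      (fun m => q ^ m / (m.factorial : ℂ)), if_pos (by simp; omega)]
  · rw [if_neg hnk]
    rw [eq_comm, Finset.sum_eq_zero]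
    intro m _
    rw [if_neg (by omega), mul_zero]

lemma gfun_hasDerivAt_update (M : ℕ) (t : ℕ → ℂ) (q : ℂ) (k : ℕ) (hk : k < M) :
    HasDerivAt (fun s => gfun M (Function.update t k s) q)
      (∑ j ∈ range M, q ^ (k + j + 1) / ((k : ℂ) + j + 1) * (1 / (Nat.factorial k : ℂ))
        * (t j / (Nat.factorial j : ℂ))) (t k) := by
  have hval : ∀ i : ℕ, (if i = k then t k else t i) = t i := by
    intro i; by_cases h : i = k <;> simp [h]
  have h : HasDerivAt (fun s => gfun M (Function.update t k s) q)
      ((1/2) * ∑ i ∈ range M, ∑ j ∈ range M,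
        (q ^ (i + j + 1) / ((i : ℂ) + j + 1) * ((if i = k then (1:ℂ) else 0) / (Nat.factorial i : ℂ))
            * (t j / (Nat.factorial j : ℂ))
          + q ^ (i + j + 1) / ((i : ℂ) + j + 1) * (t i / (Nat.factorial i : ℂ))
            * ((if j = k then (1:ℂ) else 0) / (Nat.factorial j : ℂ)))) (t k) := by
    simp only [gfun, Function.update_apply]
    apply HasDerivAt.const_mul
    apply HasDerivAt.fun_sum; intro i _
    apply HasDerivAt.fun_sum; intro j _
    have hi : HasDerivAt
        (fun s => q ^ (i + j + 1) / ((i : ℂ) + j + 1) * ((if i = k then s else t i) / (Nat.factorial i : ℂ)))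
        (q ^ (i + j + 1) / ((i : ℂ) + j + 1) * ((if i = k then (1:ℂ) else 0) / (Nat.factorial i : ℂ)))
        (t k) := by
      by_cases h : i = k
      · simpa [h] using ((hasDerivAt_id (t k)).div_const (Nat.factorial i : ℂ)).const_mul
          (q ^ (i + j + 1) / ((i : ℂ) + j + 1))
      · simpa [h] using hasDerivAt_const (t k)
          (q ^ (i + j + 1) / ((i : ℂ) + j + 1) * (t i / (Nat.factorial i : ℂ)))
    have hj : HasDerivAt
        (fun s => (if j = k then s else t j) / (Nat.factorial j : ℂ))
        ((if j = k then (1:ℂ) else 0) / (Nat.factorial j : ℂ)) (t k) := by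
      by_cases h : j = k
      · simpa [h] using (hasDerivAt_id (t k)).div_const (Nat.factorial j : ℂ)
      · simpa [h] using hasDerivAt_const (t k) (t j / (Nat.factorial j : ℂ))
    have hij := hi.mul hj
    simp only [hval] at hij
    exact hij
  convert h using 1
  rw [Finset.sum_congr rfl (fun i (_ : i ∈ range M) => Finset.sum_add_distrib
    (s := range M)), Finset.sum_add_distrib]
  have hA : (∑ i ∈ range M, ∑ j ∈ range M,
      q ^ (i + j + 1) / ((i : ℂ) + j + 1) * ((if i = k then (1:ℂ) else 0) / (Nat.factorial i : ℂ))
        * (t j / (Nat.factorial j : ℂ)))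
      = ∑ j ∈ range M, q ^ (k + j + 1) / ((k : ℂ) + j + 1) * (1 / (Nat.factorial k : ℂ))
        * (t j / (Nat.factorial j : ℂ)) := by
    rw [Finset.sum_comm]
    refine Finset.sum_congr rfl fun j _ => ?_
    have : ∀ i ∈ range M,
        q ^ (i + j + 1) / ((i : ℂ) + j + 1) * ((if i = k then (1:ℂ) else 0) / (Nat.factorial i : ℂ))
          * (t j / (Nat.factorial j : ℂ))
        = if i = k then q ^ (i + j + 1) / ((i : ℂ) + j + 1) * (1 / (Nat.factorial i : ℂ))
            * (t j / (Nat.factorial j : ℂ)) else 0 := by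
      intro i _
      by_cases h : i = k <;> simp [h]
    rw [Finset.sum_congr rfl this, Finset.sum_ite_eq' (range M) k, if_pos (Finset.mem_range.2 hk)]
  have hB : (∑ i ∈ range M, ∑ j ∈ range M,
      q ^ (i + j + 1) / ((i : ℂ) + j + 1) * (t i / (Nat.factorial i : ℂ))
        * ((if j = k then (1:ℂ) else 0) / (Nat.factorial j : ℂ)))
      = ∑ j ∈ range M, q ^ (k + j + 1) / ((k : ℂ) + j + 1) * (1 / (Nat.factorial k : ℂ))
        * (t j / (Nat.factorial j : ℂ)) := by
    have h1 : ∀ i ∈ range M, (∑ j ∈ range M,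
        q ^ (i + j + 1) / ((i : ℂ) + j + 1) * (t i / (Nat.factorial i : ℂ))
          * ((if j = k then (1:ℂ) else 0) / (Nat.factorial j : ℂ)))
        = q ^ (i + k + 1) / ((i : ℂ) + k + 1) * (t i / (Nat.factorial i : ℂ))
          * (1 / (Nat.factorial k : ℂ)) := by
      intro i _
      have : ∀ j ∈ range M,
          q ^ (i + j + 1) / ((i : ℂ) + j + 1) * (t i / (Nat.factorial i : ℂ))
            * ((if j = k then (1:ℂ) else 0) / (Nat.factorial j : ℂ))
          = if j = k then q ^ (i + j + 1) / ((i : ℂ) + j + 1) * (t i / (Nat.factorial i : ℂ))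
              * (1 / (Nat.factorial j : ℂ)) else 0 := by
        intro j _
        by_cases h : j = k <;> simp [h]
      rw [Finset.sum_congr rfl this, Finset.sum_ite_eq' (range M) k, if_pos (Finset.mem_range.2 hk)]
    rw [Finset.sum_congr rfl h1]
    refine Finset.sum_congr rfl fun i _ => ?_
    rw [show i + k + 1 = k + i + 1 from by omega]
    ring
  rw [hA, hB]
  ring

lemma key_a (M : ℕ) (t : ℕ → ℂ) (q : ℂ) (ht : ∀ n, M ≤ n → t n = 0) (i : ℕ) (hi : i < M) :
    ∑ k ∈ range M, t (k + 1) *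
        (if i ≤ k then q ^ (k - i) / ((k - i).factorial : ℂ) else 0)
      = tG M t q (i + 1) := by
  have h1 : ∑ k ∈ range M, t (k + 1) *
      (if i ≤ k then q ^ (k - i) / ((k - i).factorial : ℂ) else 0)
      = ∑ k ∈ Ico i M, t (k + 1) * (q ^ (k - i) / ((k - i).factorial : ℂ)) := by
    rw [range_eq_Ico, ← Finset.sum_Ico_consecutive _ (Nat.zero_le i) (le_of_lt hi)]
    rw [Finset.sum_eq_zero (fun k hk => ?_), zero_add]
    · refine Finset.sum_congr rfl fun k hk => ?_
      rw [if_pos (mem_Ico.1 hk).1]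
    · rw [if_neg (by simpa using (mem_Ico.1 hk).2), mul_zero]
  rw [h1, Finset.sum_Ico_eq_sum_range]
  rw [tG, eq_comm, ← Finset.sum_subset (Finset.range_subset_range.2 (Nat.sub_le M i))
    (fun m _ hm => by rw [ht (i + 1 + m) (by simp at hm ⊢; omega), mul_zero])]
  refine Finset.sum_congr rfl fun m hm => ?_
  rw [Nat.add_sub_cancel_left, show i + m + 1 = i + 1 + m from by omega]
  ring

lemma frac_helper (a b : ℂ) (ha : a ≠ 0) (hb : b ≠ 0) (hab : a + b ≠ 0) :
    1/((a+b)*b) + 1/((a+b)*a) = 1/(a*b) := by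
  field_simp

lemma key_b (N : ℕ) (t : ℕ → ℂ) (q : ℂ) (hN : ∀ n, N ≤ n → t n = 0) :
    2 * (∑ k ∈ range N, t (k + 1) * ∑ j ∈ range N,
          q ^ (k + j + 1) / ((k : ℂ) + j + 1) * (1 / (Nat.factorial k : ℂ))
            * (t j / (Nat.factorial j : ℂ)))
      + t 0 ^ 2
    = ∑ i ∈ range N, ∑ j ∈ range N,
        q ^ (i + j) * (t i / (Nat.factorial i : ℂ)) * (t j / (Nat.factorial j : ℂ)) := by
  rcases N with _ | P
  · simp [hN 0 le_rfl]
  set c : ℕ → ℕ → ℂ := fun k j => t (k + 1) *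
    (q ^ (k + j + 1) / ((k : ℂ) + j + 1) * (1 / (Nat.factorial k : ℂ))
      * (t j / (Nat.factorial j : ℂ))) with hc
  set b : ℕ → ℕ → ℂ := fun i j =>
    q ^ (i + j) * (t i / (Nat.factorial i : ℂ)) * (t j / (Nat.factorial j : ℂ)) with hb
  have htop : t (P + 1) = 0 := hN (P + 1) le_rfl
  -- LHS sum = ∑∑ c
  have hL : ∀ k, t (k + 1) * (∑ j ∈ range (P+1),
      q ^ (k + j + 1) / ((k : ℂ) + j + 1) * (1 / (Nat.factorial k : ℂ))
        * (t j / (Nat.factorial j : ℂ))) = ∑ j ∈ range (P+1), c k j := by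
    intro k; rw [Finset.mul_sum]
  -- split inner sum at j = 0 and extend
  have step1 : ∀ k, ∑ j ∈ range (P+1), c k j
      = (∑ l ∈ range (P+1), c k (l+1)) + c k 0 := by
    intro k
    rw [Finset.sum_range_succ' (c k) P, Finset.sum_range_succ (fun l => c k (l+1)) P]
    have : c k (P+1) = 0 := by simp [hc, htop]
    rw [this, add_zero]
  -- symmetrization
  have pairwise : ∀ k l : ℕ, c k (l+1) + c l (k+1) = b (k+1) (l+1) := by
    intro k l
    have hcast : ((k : ℂ) + (l : ℂ) + 2) ≠ 0 := by
      have : ((k + l + 2 : ℕ) : ℂ) ≠ 0 := Nat.cast_ne_zero.2 (by omega)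
      push_cast at this; exact this
    have h1 : ((k : ℂ) + ((l : ℂ) + 1) + 1) ≠ 0 := fun h => hcast (by linear_combination h)
    have h2 : ((l : ℂ) + ((k : ℂ) + 1) + 1) ≠ 0 := fun h => hcast (by linear_combination h)
    have hk1 : ((k : ℂ) + 1) ≠ 0 := Nat.cast_add_one_ne_zero k
    have hl1 : ((l : ℂ) + 1) ≠ 0 := Nat.cast_add_one_ne_zero l
    have hab : ((k:ℂ)+1) + ((l:ℂ)+1) ≠ 0 := fun h => hcast (by linear_combination h)
    simp only [hc, hb]
    have hfk := fac_ne k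
    have hfl := fac_ne l
    push_cast [Nat.factorial_succ]
    field_simp [hfk, hfl, h1, h2, hk1, hl1]
    ring
  have step3 : ∀ k : ℕ, c k 0 = b (k+1) 0 := by
    intro k
    have hk1 : ((k : ℂ) + 1) ≠ 0 := Nat.cast_add_one_ne_zero k
    simp only [hc, hb]
    push_cast [Nat.factorial_succ]
    field_simp
    ring
  have hzero : ∀ j : ℕ, b (P+1) j = 0 := by intro j; simp [hb, htop]
  have hzero2 : ∀ i : ℕ, b i (P+1) = 0 := by intro i; simp [hb, htop]
  have hsym : (∑ k ∈ range (P+1), ∑ l ∈ range (P+1), c k (l+1))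
      + (∑ k ∈ range (P+1), ∑ l ∈ range (P+1), c k (l+1))
      = ∑ k ∈ range (P+1), ∑ l ∈ range (P+1), b (k+1) (l+1) := by
    nth_rewrite 2 [Finset.sum_comm]
    rw [← Finset.sum_add_distrib]
    refine Finset.sum_congr rfl fun k _ => ?_
    rw [← Finset.sum_add_distrib]
    exact Finset.sum_congr rfl fun l _ => pairwise k l
  have hinner : ∀ k : ℕ, ∑ j ∈ range (P+1), b (k+1) j
      = (∑ l ∈ range (P+1), b (k+1) (l+1)) + b (k+1) 0 := by
    intro k
    rw [Finset.sum_range_succ' (fun j => b (k+1) j) P,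
      Finset.sum_range_succ (fun l => b (k+1) (l+1)) P, hzero2 (k+1), add_zero]
  have hS : ∑ i ∈ range (P+1), ∑ j ∈ range (P+1), b i j
      = (∑ k ∈ range (P+1), ∑ l ∈ range (P+1), b (k+1) (l+1))
        + (∑ k ∈ range (P+1), b (k+1) 0) + ((∑ l ∈ range (P+1), b 0 (l+1)) + b 0 0) := by
    rw [Finset.sum_range_succ' (fun i => ∑ j ∈ range (P+1), b i j) P]
    rw [show (∑ k ∈ range P, ∑ j ∈ range (P+1), b (k+1) j)
        = ∑ k ∈ range (P+1), ∑ j ∈ range (P+1), b (k+1) j from by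
      rw [Finset.sum_range_succ (fun k => ∑ j ∈ range (P+1), b (k+1) j) P,
        Finset.sum_eq_zero (fun j _ => hzero j), add_zero]]
    rw [Finset.sum_congr rfl (fun k _ => hinner k), Finset.sum_add_distrib]
    rw [Finset.sum_range_succ' (fun j => b 0 j) P,
      Finset.sum_range_succ (fun l => b 0 (l+1)) P, hzero2 0, add_zero]
  have h0 : ∑ l ∈ range (P+1), b 0 (l+1) = ∑ k ∈ range (P+1), b (k+1) 0 := by
    refine Finset.sum_congr rfl fun l _ => ?_
    simp only [hb]
    ring
  have hb00 : b 0 0 = t 0 ^ 2 := by simp [hb]; ring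
  rw [Finset.sum_congr rfl (fun k (_ : k ∈ range (P+1)) => (hL k).trans (step1 k)),
    Finset.sum_add_distrib, hS, h0, hb00,
    Finset.sum_congr rfl (fun k (_ : k ∈ range (P+1)) => step3 k), ← hsym]
  ring

/-- `τ̃` satisfies `∂τ̃/∂q = ∑_k t_{k+1} ∂τ̃/∂t_k + (t_0²/(2ε²)) τ̃`. -/
theorem tauTilde_galilean_flow (M : ℕ) (ε : ℂ) (hε : ε ≠ 0)
    (F : (Fin M → ℂ) → ℂ) (hF : Differentiable ℂ F)
    (t : ℕ → ℂ) (ht : ∀ n, M ≤ n → t n = 0) (q : ℂ) :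
    HasDerivAt (fun s => tauTilde M ε F t s)
      (∑ k ∈ Finset.range M, t (k + 1) *
          deriv (fun s => tauTilde M ε F (Function.update t k s) q) (t k)
        + t 0 ^ 2 / (2 * ε ^ 2) * tauTilde M ε F t q) q := by
  -- notation
  have hL : HasFDerivAt F (fderiv ℂ F (fun i : Fin M => tG M t q (i : ℕ)))
      (fun i : Fin M => tG M t q (i : ℕ)) := (hF _).hasFDerivAt
  -- the q-derivative of the composed map
  have hinner : HasDerivAt (fun s => (fun i : Fin M => tG M t s (i : ℕ)))
      (fun i : Fin M => tG M t q ((i : ℕ) + 1)) q :=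
    hasDerivAt_pi.2 fun i => tG_hasDerivAt_q M t ht q (i : ℕ)
  have hFcomp : HasDerivAt (fun s => F (fun i : Fin M => tG M t s (i : ℕ)))
      (fderiv ℂ F (fun i : Fin M => tG M t q (i : ℕ)) (fun i : Fin M => tG M t q ((i : ℕ) + 1))) q := by
    exact hL.comp_hasDerivAt q hinner
  have hexp : HasDerivAt (fun s => Complex.exp (gfun M t s / ε ^ 2))
      (Complex.exp (gfun M t q / ε ^ 2) * (tG M t q 0 ^ 2 / 2 / ε ^ 2)) q :=
    ((gfun_hasDerivAt_q M t q).div_const (ε ^ 2)).cexp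
  have hLHS := hFcomp.mul hexp
  -- partial derivatives in t_k
  have deriv_k : ∀ k ∈ Finset.range M,
      deriv (fun s => tauTilde M ε F (Function.update t k s) q) (t k)
      = fderiv ℂ F (fun i : Fin M => tG M t q (i : ℕ))
          (fun i : Fin M => if (i : ℕ) ≤ k then q ^ (k - (i : ℕ)) / ((k - (i : ℕ)).factorial : ℂ) else 0)
          * Complex.exp (gfun M t q / ε ^ 2)
        + F (fun i : Fin M => tG M t q (i : ℕ)) *
            (Complex.exp (gfun M t q / ε ^ 2) *
              ((∑ j ∈ range M, q ^ (k + j + 1) / ((k : ℂ) + j + 1) * (1 / (Nat.factorial k : ℂ))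
                * (t j / (Nat.factorial j : ℂ))) / ε ^ 2)) := by
    intro k hk
    have hkM : k < M := Finset.mem_range.1 hk
    have hupd : Function.update t k (t k) = t := Function.update_eq_self k t
    have hinnerk : HasDerivAt (fun s => (fun i : Fin M => tG M (Function.update t k s) q (i : ℕ)))
        (fun i : Fin M => if (i : ℕ) ≤ k then q ^ (k - (i : ℕ)) / ((k - (i : ℕ)).factorial : ℂ) else 0)
        (t k) :=
      hasDerivAt_pi.2 fun i => tG_hasDerivAt_update M t q k (i : ℕ) hkM (t k)
    have hLk : HasFDerivAt F (fderiv ℂ F (fun i : Fin M => tG M t q (i : ℕ)))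
        (fun i : Fin M => tG M (Function.update t k (t k)) q (i : ℕ)) := by
      rw [hupd]; exact hL
    have hFk : HasDerivAt (fun s => F (fun i : Fin M => tG M (Function.update t k s) q (i : ℕ)))
        (fderiv ℂ F (fun i : Fin M => tG M t q (i : ℕ))
          (fun i : Fin M => if (i : ℕ) ≤ k then q ^ (k - (i : ℕ)) / ((k - (i : ℕ)).factorial : ℂ) else 0))
        (t k) := by
      exact hLk.comp_hasDerivAt (t k) hinnerk
    have hexpk : HasDerivAt (fun s => Complex.exp (gfun M (Function.update t k s) q / ε ^ 2))
        (Complex.exp (gfun M (Function.update t k (t k)) q / ε ^ 2) *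
          ((∑ j ∈ range M, q ^ (k + j + 1) / ((k : ℂ) + j + 1) * (1 / (Nat.factorial k : ℂ))
            * (t j / (Nat.factorial j : ℂ))) / ε ^ 2)) (t k) :=
      ((gfun_hasDerivAt_update M t q k hkM).div_const (ε ^ 2)).cexp
    have htot := hFk.mul hexpk
    rw [hupd] at htot
    have : (fun s => tauTilde M ε F (Function.update t k s) q)
        = fun s => F (fun i : Fin M => tG M (Function.update t k s) q (i : ℕ)) *
            Complex.exp (gfun M (Function.update t k s) q / ε ^ 2) := rfl
    rw [this]
    exact htot.deriv
  rw [Finset.sum_congr rfl (fun k hk => by rw [deriv_k k hk] :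
    ∀ k ∈ Finset.range M, t (k + 1) * deriv (fun s => tauTilde M ε F (Function.update t k s) q) (t k)
      = t (k + 1) * (fderiv ℂ F (fun i : Fin M => tG M t q (i : ℕ))
          (fun i : Fin M => if (i : ℕ) ≤ k then q ^ (k - (i : ℕ)) / ((k - (i : ℕ)).factorial : ℂ) else 0)
          * Complex.exp (gfun M t q / ε ^ 2)
        + F (fun i : Fin M => tG M t q (i : ℕ)) *
            (Complex.exp (gfun M t q / ε ^ 2) *
              ((∑ j ∈ range M, q ^ (k + j + 1) / ((k : ℂ) + j + 1) * (1 / (Nat.factorial k : ℂ))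
                * (t j / (Nat.factorial j : ℂ))) / ε ^ 2))))]
  -- combine
  have hsum1 : ∑ k ∈ range M, t (k + 1) *
      fderiv ℂ F (fun i : Fin M => tG M t q (i : ℕ))
        (fun i : Fin M => if (i : ℕ) ≤ k then q ^ (k - (i : ℕ)) / ((k - (i : ℕ)).factorial : ℂ) else 0)
      = fderiv ℂ F (fun i : Fin M => tG M t q (i : ℕ)) (fun i : Fin M => tG M t q ((i : ℕ) + 1)) := by
    rw [show (fun i : Fin M => tG M t q ((i : ℕ) + 1))
        = ∑ k ∈ range M, t (k + 1) •
          (fun i : Fin M => if (i : ℕ) ≤ k then q ^ (k - (i : ℕ)) / ((k - (i : ℕ)).factorial : ℂ) else 0)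
      from ?_]
    · rw [map_sum]
      refine Finset.sum_congr rfl fun k _ => ?_
      rw [map_smul]; simp [smul_eq_mul]
    · funext i
      rw [Finset.sum_apply]
      simp only [Pi.smul_apply, smul_eq_mul]
      exact (key_a M t q ht (i : ℕ) i.isLt).symm
  have hkb := key_b M t q ht
  rw [← tG0_sq M t q] at hkb
  have expand : ∀ k ∈ range M, t (k + 1) *
      (fderiv ℂ F (fun i : Fin M => tG M t q (i : ℕ))
          (fun i : Fin M => if (i : ℕ) ≤ k then q ^ (k - (i : ℕ)) / ((k - (i : ℕ)).factorial : ℂ) else 0)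
          * Complex.exp (gfun M t q / ε ^ 2)
        + F (fun i : Fin M => tG M t q (i : ℕ)) *
            (Complex.exp (gfun M t q / ε ^ 2) *
              ((∑ j ∈ range M, q ^ (k + j + 1) / ((k : ℂ) + j + 1) * (1 / (Nat.factorial k : ℂ))
                * (t j / (Nat.factorial j : ℂ))) / ε ^ 2)))
      = (t (k + 1) * fderiv ℂ F (fun i : Fin M => tG M t q (i : ℕ))
          (fun i : Fin M => if (i : ℕ) ≤ k then q ^ (k - (i : ℕ)) / ((k - (i : ℕ)).factorial : ℂ) else 0))
          * Complex.exp (gfun M t q / ε ^ 2)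
        + (F (fun i : Fin M => tG M t q (i : ℕ)) * Complex.exp (gfun M t q / ε ^ 2) / ε ^ 2) *
            (t (k + 1) * ∑ j ∈ range M, q ^ (k + j + 1) / ((k : ℂ) + j + 1) * (1 / (Nat.factorial k : ℂ))
              * (t j / (Nat.factorial j : ℂ))) := by
    intro k _; ring
  rw [Finset.sum_congr rfl expand, Finset.sum_add_distrib, ← Finset.sum_mul, hsum1, ← Finset.mul_sum]
  have hτ : tauTilde M ε F t q = F (fun i : Fin M => tG M t q (i : ℕ)) *
      Complex.exp (gfun M t q / ε ^ 2) := rfl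
  rw [hτ]
  apply HasDerivAt.congr_deriv hLHS
  symm
  linear_combination (F (fun i : Fin M => tG M t q (i : ℕ)) *
    Complex.exp (gfun M t q / ε ^ 2) / (2 * ε ^ 2)) * hkb
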